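/- Let L > 0 and let u : [0,L] → ℝ³ be twice continuously differentiable with |u'(s)| = 1 for all s ∈ [0,L]. Fix s₀ ∈ [0,L) and l ∈ (0, L − s₀] with |u(s₀+l) − u(s₀)| > 0 and l·sup_{s∈[0,L]}|u''(s)| ≤ 2. Then the function λ ↦ |u(s₀+λ) − u(s₀)| is differentiable at λ = l and its derivative there lies in the interval [1 − (l/2)·sup_{s∈[0,L]}|u''(s)|, 1]. -/

import Mathlib

open Set
open scoped RealInnerProductSpace

/-- for a twice continuously differentiable arc-length parametrized curve
`u : [0,L] → ℝ³`, the function `λ ↦ |u(s₀+λ) − u(s₀)|` is differentiable at `λ = l`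
(within its natural domain `[0, L−s₀]`) with derivative in `[1 − (l/2)·sup|u''|, 1]`. -/
theorem stmt4 (L : ℝ) (hL : 0 < L) (u : ℝ → EuclideanSpace ℝ (Fin 3))
    (hu : ContDiffOn ℝ 2 u (Icc 0 L))
    (hunit : ∀ s ∈ Icc 0 L, ‖derivWithin u (Icc 0 L) s‖ = 1)
    (s₀ l : ℝ) (hs₀ : 0 ≤ s₀) (hs₀L : s₀ < L) (hl : 0 < l) (hlL : l ≤ L - s₀)
    (hpos : 0 < ‖u (s₀ + l) - u s₀‖)
    (hsmall : l * (⨆ s : Icc (0:ℝ) L, ‖iteratedDerivWithin 2 u (Icc 0 L) s‖) ≤ 2) :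
    ∃ d : ℝ,
      HasDerivWithinAt (fun lam => ‖u (s₀ + lam) - u s₀‖) d (Icc 0 (L - s₀)) l ∧
      1 - l / 2 * (⨆ s : Icc (0:ℝ) L, ‖iteratedDerivWithin 2 u (Icc 0 L) s‖) ≤ d ∧
      d ≤ 1 := by
  have huniq : UniqueDiffOn ℝ (Icc (0:ℝ) L) := uniqueDiffOn_Icc hL
  set K : ℝ := ⨆ s : Icc (0:ℝ) L, ‖iteratedDerivWithin 2 u (Icc 0 L) s‖ with hKdef
  have hcont2 : ContinuousOn (iteratedDerivWithin 2 u (Icc 0 L)) (Icc 0 L) :=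
    hu.continuousOn_iteratedDerivWithin (by norm_num) huniq
  have hbdd : BddAbove (Set.range fun s : Icc (0:ℝ) L =>
      ‖iteratedDerivWithin 2 u (Icc 0 L) s‖) := by
    have h := (isCompact_Icc.image_of_continuousOn hcont2.norm).bddAbove
    rwa [Set.image_eq_range] at h
  have hKs : ∀ s ∈ Icc (0:ℝ) L, ‖iteratedDerivWithin 2 u (Icc 0 L) s‖ ≤ K := by
    intro s hs; exact le_ciSup hbdd ⟨s, hs⟩
  have hK0 : 0 ≤ K := le_trans (norm_nonneg _) (hKs 0 ⟨le_rfl, hL.le⟩)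
  set u' : ℝ → EuclideanSpace ℝ (Fin 3) := derivWithin u (Icc 0 L) with hu'def
  have hu1 : ContDiffOn ℝ 1 u' (Icc 0 L) := hu.derivWithin huniq (by norm_num)
  have hudiff : DifferentiableOn ℝ u (Icc 0 L) := hu.differentiableOn (by norm_num)
  have h2eq : ∀ x ∈ Icc (0:ℝ) L,
      iteratedDerivWithin 2 u (Icc 0 L) x = derivWithin u' (Icc 0 L) x := by
    intro x hx
    rw [show (2:ℕ) = 1 + 1 from rfl, iteratedDerivWithin_succ',
      iteratedDerivWithin_one]
  have hLip : ∀ a ∈ Icc (0:ℝ) L, ∀ b ∈ Icc (0:ℝ) L, ‖u' b - u' a‖ ≤ K * ‖b - a‖ := by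
    intro a ha b hb
    refine Convex.norm_image_sub_le_of_norm_derivWithin_le (hu1.differentiableOn one_ne_zero)
      (fun x hx => ?_) (convex_Icc 0 L) ha hb
    rw [← h2eq x hx]; exact hKs x hx
  have hsl : s₀ + l ∈ Icc (0:ℝ) L := ⟨by linarith, by linarith⟩
  have hs0mem : s₀ ∈ Icc (0:ℝ) L := ⟨hs₀, hs₀L.le⟩
  set v : EuclideanSpace ℝ (Fin 3) := u' (s₀ + l) with hvdef
  have hv : ‖v‖ = 1 := hunit _ hsl
  -- derivative of the shifted curve
  have hshift : ∀ (T : Set ℝ) (t : ℝ), s₀ + t ∈ Icc (0:ℝ) L →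
      Set.MapsTo (fun x => s₀ + x) T (Icc 0 L) →
      HasDerivWithinAt (fun x => u (s₀ + x)) (u' (s₀ + t)) T t := by
    intro T t ht hmaps
    have h1 : HasDerivWithinAt u (u' (s₀ + t)) (Icc 0 L) (s₀ + t) :=
      (hudiff _ ht).hasDerivWithinAt
    have h2 : HasDerivWithinAt (fun x : ℝ => s₀ + x) 1 T t := by
      simpa using (hasDerivWithinAt_id t T).const_add s₀
    have := h1.scomp t h2 hmaps
    rw [one_smul] at this
    exact this
  -- the key inner product lower bound
  have hmapsIcc : Set.MapsTo (fun x => s₀ + x) (Icc 0 l) (Icc (0:ℝ) L) := by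
    intro x hx; simp only [mem_Icc] at hx ⊢; constructor <;> linarith
  have hinnerlow : l - K * l ^ 2 / 2 ≤ ⟪u (s₀ + l) - u s₀, v⟫ := by
    set g : ℝ → ℝ := fun t => ⟪u (s₀ + t) - u s₀, v⟫ - t + K * (l * t - t ^ 2 / 2) with hgdef
    have hgcont : ContinuousOn g (Icc 0 l) := by
      have hc : ContinuousOn (fun t => u (s₀ + t)) (Icc 0 l) :=
        hu.continuousOn.comp (by fun_prop) hmapsIcc
      exact (((hc.sub continuousOn_const).inner continuousOn_const).sub
        (by fun_prop)).add (by fun_prop)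
    have hg' : ∀ t ∈ interior (Icc (0:ℝ) l),
        HasDerivWithinAt g (⟪u' (s₀ + t), v⟫ - 1 + K * (l - t)) (interior (Icc 0 l)) t := by
      intro t ht
      rw [interior_Icc] at ht
      have htmem : s₀ + t ∈ Icc (0:ℝ) L := ⟨by linarith [ht.1], by linarith [ht.2]⟩
      have h1 : HasDerivWithinAt (fun x => u (s₀ + x) - u s₀) (u' (s₀ + t)) (Ioo 0 l) t :=
        (hshift (Ioo 0 l) t htmem (hmapsIcc.mono_left Ioo_subset_Icc_self)).sub_const _
      have h2 : HasDerivWithinAt (fun x => (⟪u (s₀ + x) - u s₀, v⟫ : ℝ)) ⟪u' (s₀ + t), v⟫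
          (Ioo 0 l) t := by
        simpa using HasDerivWithinAt.inner ℝ h1 (hasDerivWithinAt_const t (Ioo 0 l) v)
      have h3 : HasDerivAt (fun x : ℝ => K * (l * x - x ^ 2 / 2)) (K * (l - t)) t := by
        have := (((hasDerivAt_id t).const_mul l).sub ((hasDerivAt_pow 2 t).div_const 2)).const_mul K
        refine this.congr_deriv ?_; ring_nf
      rw [interior_Icc]
      exact (h2.sub (hasDerivWithinAt_id t _)).add (h3.hasDerivWithinAt)
    have hg'nonneg : ∀ t ∈ interior (Icc (0:ℝ) l),
        0 ≤ ⟪u' (s₀ + t), v⟫ - 1 + K * (l - t) := by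
      intro t ht
      rw [interior_Icc] at ht
      have htmem : s₀ + t ∈ Icc (0:ℝ) L := ⟨by linarith [ht.1], by linarith [ht.2]⟩
      have hdiff : ‖u' (s₀ + t) - v‖ ≤ K * (l - t) := by
        have := hLip (s₀ + l) hsl (s₀ + t) htmem
        have habs : ‖(s₀ + t) - (s₀ + l)‖ = l - t := by
          rw [Real.norm_eq_abs, abs_of_nonpos (by linarith [ht.2])]; ring
        rw [habs] at this; exact this
      have hip : ⟪u' (s₀ + t), v⟫ = 1 + ⟪u' (s₀ + t) - v, v⟫ := by
        rw [inner_sub_left, real_inner_self_eq_norm_sq, hv]; ring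
      have habs2 : |(⟪u' (s₀ + t) - v, v⟫ : ℝ)| ≤ K * (l - t) := by
        calc |(⟪u' (s₀ + t) - v, v⟫ : ℝ)| ≤ ‖u' (s₀ + t) - v‖ * ‖v‖ :=
          abs_real_inner_le_norm _ _
        _ ≤ K * (l - t) := by rw [hv, mul_one]; exact hdiff
      have := neg_le_of_abs_le habs2
      rw [hip]; linarith
    have hmono : MonotoneOn g (Icc 0 l) :=
      monotoneOn_of_hasDerivWithinAt_nonneg (convex_Icc 0 l) hgcont hg' hg'nonneg
    have h0l := hmono (left_mem_Icc.2 hl.le) (right_mem_Icc.2 hl.le) hl.le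
    have hg0 : g 0 = 0 := by simp [hgdef]
    have hgl : g l = ⟪u (s₀ + l) - u s₀, v⟫ - l + K * l ^ 2 / 2 := by
      simp only [hgdef]; ring_nf
    rw [hg0, hgl] at h0l
    linarith
  -- the norm bound
  have hnormle : ‖u (s₀ + l) - u s₀‖ ≤ l := by
    have := Convex.norm_image_sub_le_of_norm_derivWithin_le hudiff
      (fun x hx => le_of_eq (hunit x hx)) (convex_Icc 0 L) hs0mem hsl
    simpa [abs_of_pos hl] using this
  -- the derivative of the norm function
  set f : ℝ → EuclideanSpace ℝ (Fin 3) := fun lam => u (s₀ + lam) - u s₀ with hfdef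
  have hlmem : l ∈ Icc (0:ℝ) (L - s₀) := ⟨hl.le, hlL⟩
  have hmaps2 : Set.MapsTo (fun x => s₀ + x) (Icc 0 (L - s₀)) (Icc (0:ℝ) L) := by
    intro x hx; simp only [mem_Icc] at hx ⊢; constructor <;> linarith
  have hf : HasDerivWithinAt f v (Icc 0 (L - s₀)) l :=
    (hshift (Icc 0 (L - s₀)) l hsl hmaps2).sub_const _
  have hq : HasDerivWithinAt (fun lam => (⟪f lam, f lam⟫ : ℝ)) (⟪f l, v⟫ + ⟪v, f l⟫)
      (Icc 0 (L - s₀)) l := HasDerivWithinAt.inner ℝ hf hf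
  have hqlpos : (0:ℝ) < ⟪f l, f l⟫ := by
    rw [real_inner_self_eq_norm_sq]; positivity
  have hsqrt : HasDerivAt Real.sqrt (1 / (2 * Real.sqrt ⟪f l, f l⟫)) ⟪f l, f l⟫ :=
    Real.hasDerivAt_sqrt hqlpos.ne'
  have hcomp := hsqrt.comp_hasDerivWithinAt l hq
  have hfl : Real.sqrt ⟪f l, f l⟫ = ‖f l‖ := by
    rw [real_inner_self_eq_norm_mul_norm, Real.sqrt_mul_self (norm_nonneg _)]
  refine ⟨⟪f l, v⟫ / ‖f l‖, ?_, ?_, ?_⟩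
  · have heq : (fun lam => ‖u (s₀ + lam) - u s₀‖) =
        (Real.sqrt ∘ fun lam => (⟪f lam, f lam⟫ : ℝ)) := by
      funext lam
      simp only [Function.comp_apply, real_inner_self_eq_norm_mul_norm,
        Real.sqrt_mul_self (norm_nonneg _)]
      rfl
    rw [heq]
    refine hcomp.congr_deriv ?_
    rw [hfl, real_inner_comm v (f l)]
    have : ‖f l‖ ≠ 0 := hpos.ne'
    field_simp
    ring
  · have hnum : l * (1 - l / 2 * K) ≤ ⟪f l, v⟫ := by
      have : l * (1 - l / 2 * K) = l - K * l ^ 2 / 2 := by ring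
      rw [this]; exact hinnerlow
    have hfac : 0 ≤ 1 - l / 2 * K := by nlinarith
    have hnumpos : 0 ≤ ⟪f l, v⟫ := le_trans (by positivity) hnum
    have h1 : ⟪f l, v⟫ / l ≤ ⟪f l, v⟫ / ‖f l‖ :=
      div_le_div_of_nonneg_left hnumpos hpos hnormle
    have h2 : 1 - l / 2 * K ≤ ⟪f l, v⟫ / l := by
      rw [le_div_iff₀ hl]; linarith [hnum]
    linarith
  · have := real_inner_le_norm (f l) v
    rw [hv, mul_one] at this
    rw [div_le_one hpos]
    exact this
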